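/- Let E : ℂ^n → ℂ^n be the map whose k-th component is the k-th elementary symmetric polynomial e_k(x_1, …, x_n). Then the determinant of the Jacobian matrix of E at a point x ∈ ℂ^n equals ∏_{1 ≤ j < k ≤ n} (x_j − x_k) up to sign; in particular, the Jacobian of E is nonsingular at x if and only if the coordinates x_1, …, x_n are pairwise distinct. -/

import Mathlib

open Finset

/-- The `k`-th elementary symmetric polynomial map (`k` ranging over `1,…,n`
via `k : Fin n` with `e (k) = e_{k+1}`). -/
noncomputable def esymMap (n : ℕ) (x : Fin n → ℂ) (k : Fin n) : ℂ :=
  ∑ s ∈ Finset.powersetCard ((k : ℕ) + 1) (Finset.univ : Finset (Fin n)),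
    ∏ j ∈ s, x j

/-- The Jacobian matrix of `esymMap` at `x`: entry `(k, i)` is the partial
derivative of the `k`-th component with respect to `x_i`. -/
noncomputable def esymJacobian (n : ℕ) (x : Fin n → ℂ) :
    Matrix (Fin n) (Fin n) ℂ :=
  Matrix.of fun k i => fderiv ℂ (fun y => esymMap n y k) x (Pi.single i 1)


variable {n : ℕ} (x : Fin n → ℂ)

/-- abbreviation for partial elementary symmetric sums -/
noncomputable def esum (x : Fin n → ℂ) (k : ℕ) (s : Finset (Fin n)) : ℂ :=
  ∑ t ∈ Finset.powersetCard k s, ∏ j ∈ t, x j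

lemma esum_zero (s : Finset (Fin n)) : esum x 0 s = 1 := by
  simp [esum]

lemma esum_insert {i : Fin n} {s : Finset (Fin n)} (hi : i ∉ s) (k : ℕ) :
    esum x (k + 1) (insert i s) = esum x (k + 1) s + x i * esum x k s := by
  unfold esum
  rw [Finset.powersetCard_succ_insert hi, Finset.sum_union, Finset.sum_image]
  · rw [Finset.mul_sum]
    congr 1
    refine Finset.sum_congr rfl fun t ht => ?_
    rw [Finset.prod_insert fun hmem => hi ((Finset.mem_powersetCard.1 ht).1 hmem)]
  · intro t ht u hu h
    have hit : i ∉ t := fun hmem => hi ((Finset.mem_powersetCard.1 ht).1 hmem)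
    have hiu : i ∉ u := fun hmem => hi ((Finset.mem_powersetCard.1 hu).1 hmem)
    rw [← Finset.erase_insert hit, ← Finset.erase_insert hiu, h]
  · rw [Finset.disjoint_right]
    rintro t ht hmem
    rw [Finset.mem_image] at ht
    obtain ⟨u, hu, rfl⟩ := ht
    have := (Finset.mem_powersetCard.1 hmem).1 (Finset.mem_insert_self i u)
    exact hi this

lemma esum_erase (i : Fin n) {s : Finset (Fin n)} (hi : i ∉ s) (k : ℕ) :
    esum x k s = ∑ m ∈ Finset.range (k + 1),
      (-1) ^ m * esum x (k - m) (insert i s) * x i ^ m := by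
  induction k with
  | zero => simp [esum_zero]
  | succ k ih =>
      rw [Finset.sum_range_succ']
      have h2 : ∀ m ∈ Finset.range (k + 1),
          (-1 : ℂ) ^ (m + 1) * esum x (k + 1 - (m + 1)) (insert i s) * x i ^ (m + 1)
          = -(x i * ((-1) ^ m * esum x (k - m) (insert i s) * x i ^ m)) := by
        intro m _
        have : k + 1 - (m + 1) = k - m := by omega
        rw [this]
        ring
      rw [Finset.sum_congr rfl h2, Finset.sum_neg_distrib, ← Finset.mul_sum, ← ih]
      simp only [Nat.sub_zero, pow_zero, mul_one, one_mul]
      rw [esum_insert x hi k]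
      ring

lemma hasFDeriv_esymMap (k : Fin n) :
    HasFDerivAt (𝕜 := ℂ) (fun y => esymMap n y k)
      (∑ s ∈ Finset.powersetCard ((k : ℕ) + 1) (Finset.univ : Finset (Fin n)),
        ∑ j ∈ s, (∏ l ∈ s.erase j, x l) • ContinuousLinearMap.proj (R := ℂ) (φ := fun _ : Fin n => ℂ) j) x := by
  apply HasFDerivAt.fun_sum
  intro s _
  exact HasFDerivAt.finset_prod (fun j _ => hasFDerivAt_apply (𝕜 := ℂ) j x)

lemma jacobian_entry (k i : Fin n) :
    esymJacobian n x k i = esum x (k : ℕ) (Finset.univ.erase i) := by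
  have hd := (hasFDeriv_esymMap x k).fderiv
  show fderiv ℂ (fun y => esymMap n y k) x (Pi.single i 1) = _
  rw [hd]
  rw [ContinuousLinearMap.sum_apply]
  have h1 : ∀ s ∈ Finset.powersetCard ((k : ℕ) + 1) (Finset.univ : Finset (Fin n)),
      (∑ j ∈ s, (∏ l ∈ s.erase j, x l) • ContinuousLinearMap.proj (R := ℂ) (φ := fun _ : Fin n => ℂ) j) (Pi.single i 1)
        = if i ∈ s then ∏ l ∈ s.erase i, x l else 0 := by
    intro s _
    rw [ContinuousLinearMap.sum_apply]
    have h2 : ∀ j ∈ s,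
        ((∏ l ∈ s.erase j, x l) • ContinuousLinearMap.proj (R := ℂ) (φ := fun _ : Fin n => ℂ) j)
          (Pi.single i 1) = if j = i then ∏ l ∈ s.erase j, x l else 0 := by
      intro j _
      rw [ContinuousLinearMap.smul_apply, ContinuousLinearMap.proj_apply,
        Pi.single_apply]
      by_cases h : j = i <;> simp [h]
    rw [Finset.sum_congr rfl h2]
    rw [Finset.sum_ite_eq' s i (fun j => ∏ l ∈ s.erase j, x l)]
  rw [Finset.sum_congr rfl h1, ← Finset.sum_filter]
  unfold esum
  apply Finset.sum_nbij' (fun s => s.erase i) (fun t => insert i t)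
  · intro s hs
    simp only [Finset.mem_filter, Finset.mem_powersetCard] at hs ⊢
    obtain ⟨⟨_, hcard⟩, his⟩ := hs
    constructor
    · intro a ha
      rw [Finset.mem_erase] at ha ⊢
      exact ⟨ha.1, Finset.mem_univ a⟩
    · rw [Finset.card_erase_of_mem his, hcard]
      omega
  · intro t ht
    rw [Finset.mem_powersetCard] at ht
    obtain ⟨hsub, hcard⟩ := ht
    have hit : i ∉ t := fun h => (Finset.mem_erase.1 (hsub h)).1 rfl
    simp only [Finset.mem_filter, Finset.mem_powersetCard]
    exact ⟨⟨Finset.subset_univ _, by rw [Finset.card_insert_of_notMem hit, hcard]⟩,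
      Finset.mem_insert_self i t⟩
  · intro s hs
    simp only [Finset.mem_filter] at hs
    exact Finset.insert_erase hs.2
  · intro t ht
    rw [Finset.mem_powersetCard] at ht
    have hit : i ∉ t := fun h => (Finset.mem_erase.1 (ht.1 h)).1 rfl
    exact Finset.erase_insert hit
  · intro s _
    rfl

noncomputable def Lmat (x : Fin n → ℂ) : Matrix (Fin n) (Fin n) ℂ :=
  Matrix.of fun k m => if (m : ℕ) ≤ (k : ℕ) then
    (-1) ^ (m : ℕ) * esum x ((k : ℕ) - (m : ℕ)) Finset.univ else 0

lemma jacobian_decomp :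
    esymJacobian n x = Lmat x * (Matrix.vandermonde x).transpose := by
  ext k i
  rw [jacobian_entry, Matrix.mul_apply]
  have hins : insert i (Finset.univ.erase i) = (Finset.univ : Finset (Fin n)) :=
    Finset.insert_erase (Finset.mem_univ i)
  rw [esum_erase x i (Finset.notMem_erase i _) (k : ℕ), hins]
  have hsum : ∑ m : Fin n, Lmat x k m * (Matrix.vandermonde x).transpose m i
      = ∑ m ∈ Finset.range n,
        (if m ≤ (k : ℕ) then (-1) ^ m * esum x ((k : ℕ) - m) Finset.univ else 0) * x i ^ m := by
    rw [← Fin.sum_univ_eq_sum_range]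
    rfl
  rw [hsum]
  rw [← Finset.sum_subset (Finset.range_subset_range.2 k.2)]
  · refine Finset.sum_congr rfl fun m hm => ?_
    rw [Finset.mem_range] at hm
    rw [if_pos (by omega)]
  · intro m _ hm
    rw [Finset.mem_range] at hm
    rw [if_neg (by omega), zero_mul]

lemma det_Lmat : (Lmat x).det = ∏ k : Fin n, (-1 : ℂ) ^ (k : ℕ) := by
  rw [Matrix.det_of_lowerTriangular]
  · refine Finset.prod_congr rfl fun k _ => ?_
    simp [Lmat, esum_zero]
  · intro k m h
    have h2 : (k : ℕ) < (m : ℕ) := h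
    simp only [Lmat, Matrix.of_apply]
    rw [if_neg (by omega)]

theorem stmt4 (n : ℕ) (x : Fin n → ℂ) :
    ((esymJacobian n x).det = ∏ j : Fin n, ∏ k ∈ Finset.Ioi j, (x j - x k) ∨
      (esymJacobian n x).det = -∏ j : Fin n, ∏ k ∈ Finset.Ioi j, (x j - x k)) ∧
    ((esymJacobian n x).det ≠ 0 ↔ Function.Injective x) := by
  have hdet : (esymJacobian n x).det = ∏ j : Fin n, ∏ k ∈ Finset.Ioi j, (x j - x k) := by
    rw [jacobian_decomp, Matrix.det_mul, Matrix.det_transpose, Matrix.det_vandermonde,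
      det_Lmat]
    have h1 : ∏ k : Fin n, (-1 : ℂ) ^ (k : ℕ) = (-1) ^ (∑ k : Fin n, (k : ℕ)) :=
      Finset.prod_pow_eq_pow_sum _ _ _
    have h2 : ∏ j : Fin n, ∏ k ∈ Finset.Ioi j, (x j - x k)
        = (-1 : ℂ) ^ (∑ j : Fin n, (Finset.Ioi j).card)
          * ∏ j : Fin n, ∏ k ∈ Finset.Ioi j, (x k - x j) := by
      rw [← Finset.prod_pow_eq_pow_sum, ← Finset.prod_mul_distrib]
      refine Finset.prod_congr rfl fun j _ => ?_
      rw [← Finset.prod_const, ← Finset.prod_mul_distrib]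
      refine Finset.prod_congr rfl fun k _ => ?_
      ring
    have hexp : ∑ j : Fin n, (Finset.Ioi j).card = ∑ k : Fin n, (k : ℕ) := by
      simp_rw [Fin.card_Ioi]
      rw [Fin.sum_univ_eq_sum_range (fun j => n - 1 - j),
        Fin.sum_univ_eq_sum_range (fun k => k)]
      exact Finset.sum_range_reflect id n
    rw [h2, hexp, h1]
  refine ⟨Or.inl hdet, ?_⟩
  rw [hdet]
  constructor
  · intro h a b hab
    by_contra hne
    rcases lt_or_gt_of_ne hne with hlt | hlt
    · refine h ?_
      apply Finset.prod_eq_zero (Finset.mem_univ a)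
      apply Finset.prod_eq_zero (Finset.mem_Ioi.2 hlt)
      rw [hab, sub_self]
    · refine h ?_
      apply Finset.prod_eq_zero (Finset.mem_univ b)
      apply Finset.prod_eq_zero (Finset.mem_Ioi.2 hlt)
      rw [hab, sub_self]
  · intro hinj
    rw [Finset.prod_ne_zero_iff]
    intro j _
    rw [Finset.prod_ne_zero_iff]
    intro k hk
    rw [Finset.mem_Ioi] at hk
    exact sub_ne_zero.2 fun h => absurd (hinj h) (ne_of_lt hk)
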